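/- Let s(x) = c · x₁^{p₁} ⋯ x_N^{p_N} on the positive orthant with c < 0. If all exponents p_i are positive and ∑_{i=1}^N p_i ≤ 1, then s is convex. -/

import Mathlib

open Finset

lemma geom_key {N : ℕ} (p : Fin N → ℝ) (hp : ∀ i, 0 ≤ p i) (hsum : ∑ i, p i ≤ 1)
    (t : Fin N → ℝ) (ht : ∀ i, 0 ≤ t i) :
    ∏ i, t i ^ p i ≤ ∑ i, p i * t i + (1 - ∑ i, p i) := by
  have h := Real.geom_mean_le_arith_mean_weighted Finset.univ
    (Fin.cons (1 - ∑ i, p i) p) (Fin.cons 1 t)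
    (fun i _ => by
      refine Fin.cases ?_ ?_ i
      · simpa using sub_nonneg.2 hsum
      · intro j; simpa using hp j)
    (by simp [Fin.sum_univ_succ])
    (fun i _ => by
      refine Fin.cases ?_ ?_ i
      · simp
      · intro j; simpa using ht j)
  simpa [Fin.prod_univ_succ, Fin.sum_univ_succ, Real.one_rpow, add_comm, mul_comm] using h

lemma geom_concave {N : ℕ} (p : Fin N → ℝ) (hp : ∀ i, 0 < p i) (hsum : ∑ i, p i ≤ 1) :
    ConcaveOn ℝ {x : Fin N → ℝ | ∀ i, 0 < x i} (fun x => ∏ i, x i ^ p i) := by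
  constructor
  · have hS : {x : Fin N → ℝ | ∀ i, 0 < x i} = Set.pi Set.univ (fun _ => Set.Ioi (0:ℝ)) := by
      ext x; simp [Set.mem_pi]
    rw [hS]; exact convex_pi fun i _ => convex_Ioi 0
  · intro x hx y hy a b ha hb hab
    simp only [Set.mem_setOf_eq] at hx hy
    have hz : ∀ i, 0 < (a • x + b • y) i := by
      intro i
      simp only [Pi.add_apply, Pi.smul_apply, smul_eq_mul]
      rcases eq_or_lt_of_le ha with h | h
      · have hb1 : b = 1 := by linarith
        simpa [← h, hb1] using hy i
      · have : 0 < a * x i := mul_pos h (hx i)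
        nlinarith [mul_nonneg hb (hy i).le]
    set z : Fin N → ℝ := a • x + b • y with hzdef
    have hP : 0 < ∏ i, z i ^ p i :=
      Finset.prod_pos fun i _ => Real.rpow_pos_of_pos (hz i) _
    have hxfac : ∏ i, x i ^ p i = (∏ i, z i ^ p i) * ∏ i, (x i / z i) ^ p i := by
      rw [← Finset.prod_mul_distrib]
      refine Finset.prod_congr rfl fun i _ => ?_
      rw [← Real.mul_rpow (hz i).le (div_nonneg (hx i).le (hz i).le)]
      rw [mul_div_cancel₀ _ (hz i).ne']
    have hyfac : ∏ i, y i ^ p i = (∏ i, z i ^ p i) * ∏ i, (y i / z i) ^ p i := by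
      rw [← Finset.prod_mul_distrib]
      refine Finset.prod_congr rfl fun i _ => ?_
      rw [← Real.mul_rpow (hz i).le (div_nonneg (hy i).le (hz i).le)]
      rw [mul_div_cancel₀ _ (hz i).ne']
    have hA := geom_key p (fun i => (hp i).le) hsum (fun i => x i / z i)
      (fun i => div_nonneg (hx i).le (hz i).le)
    have hB := geom_key p (fun i => (hp i).le) hsum (fun i => y i / z i)
      (fun i => div_nonneg (hy i).le (hz i).le)
    have hsum1 : a * (∑ i, p i * (x i / z i) + (1 - ∑ i, p i))
        + b * (∑ i, p i * (y i / z i) + (1 - ∑ i, p i)) = 1 := by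
      have : a * ∑ i, p i * (x i / z i) + b * ∑ i, p i * (y i / z i) = ∑ i, p i := by
        rw [Finset.mul_sum, Finset.mul_sum, ← Finset.sum_add_distrib]
        refine Finset.sum_congr rfl fun i _ => ?_
        have hzi : z i = a * x i + b * y i := by simp [hzdef]
        have h0 : a * x i + b * y i ≠ 0 := by rw [← hzi]; exact (hz i).ne'
        rw [hzi]
        field_simp
      nlinarith [this]
    calc a • (∏ i, x i ^ p i) + b • (∏ i, y i ^ p i)
        = (∏ i, z i ^ p i) * (a * ∏ i, (x i / z i) ^ p i + b * ∏ i, (y i / z i) ^ p i) := by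
          rw [hxfac, hyfac]; simp only [smul_eq_mul]; ring
      _ ≤ (∏ i, z i ^ p i) * 1 := by
          refine mul_le_mul_of_nonneg_left ?_ hP.le
          calc a * ∏ i, (x i / z i) ^ p i + b * ∏ i, (y i / z i) ^ p i
              ≤ a * (∑ i, p i * (x i / z i) + (1 - ∑ i, p i))
                + b * (∑ i, p i * (y i / z i) + (1 - ∑ i, p i)) := by
                gcongr
            _ = 1 := hsum1
      _ = ∏ i, z i ^ p i := mul_one _

theorem negative_signomial_term_convex {N : ℕ} (c : ℝ) (p : Fin N → ℝ)
    (hc : c < 0) (hp : ∀ i, 0 < p i) (hsum : ∑ i, p i ≤ 1) :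
    ConvexOn ℝ {x : Fin N → ℝ | ∀ i, 0 < x i}
      (fun x => c * ∏ i, x i ^ p i) := by
  have h := ((geom_concave p hp hsum).smul (c := -c) (by linarith)).neg
  convert h using 2 with x
  · rfl
  · rfl
  · rfl
  simp only [Pi.neg_apply, Pi.smul_apply, smul_eq_mul]
  ring
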